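/- The gradient of b fails to be square-integrable along the Dirichlet ray: ‖∇b(t, 0)‖ = β t^{β−1} for every t > 0 (gradient of the real-analytic extension of b), and consequently ∫₀¹ ‖∇b(t, 0)‖² dt = +∞. -/

import Mathlib

open MeasureTheory

/-- The Euclidean norm of the gradient of `b : ℝ × ℝ → ℝ` at a point. -/
noncomputable def gradNorm (b : ℝ × ℝ → ℝ) (p : ℝ × ℝ) : ℝ :=
  Real.sqrt ((fderiv ℝ b p ((1 : ℝ), (0 : ℝ))) ^ 2 +
    (fderiv ℝ b p ((0 : ℝ), (1 : ℝ))) ^ 2)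

private lemma brown_im_cpow (β : ℝ) (z : ℂ) (hz : z ≠ 0) :
    ((z ^ (β : ℂ)).im) = (‖z‖) ^ β * Real.sin (β * Complex.arg z) := by
  have habs : 0 < ‖z‖ := norm_pos_iff.mpr hz
  rw [Complex.cpow_def_of_ne_zero hz, Complex.exp_im]
  have hre : (Complex.log z * (β : ℂ)).re = β * Real.log (‖z‖) := by
    simp [Complex.log_re]; ring
  have him : (Complex.log z * (β : ℂ)).im = β * Complex.arg z := by
    simp [Complex.log_im]; ring
  rw [hre, him, Real.rpow_def_of_pos habs, mul_comm β]

/-- the gradient of Brown's function `b` fails to be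
square-integrable along the Dirichlet ray: `‖∇b(t,0)‖ = β t^(β−1)` for every
`t > 0`, and consequently `∫₀¹ ‖∇b(t,0)‖² dt = +∞`. -/
theorem brown_b_gradient_not_square_integrable
    (α : ℝ) (hα₁ : Real.pi ≤ α) (hα₂ : α < 2 * Real.pi)
    (β : ℝ) (hβ : β = Real.pi / (2 * α))
    (δ : ℝ) (hδ : 0 < δ) (hαδ : α + 2 * δ < 2 * Real.pi)
    (b : ℝ × ℝ → ℝ)
    (hb : ∀ r θ : ℝ, 0 < r → -δ < θ → θ < α + δ →
      b (r * Real.cos θ, r * Real.sin θ) = r ^ β * Real.sin (β * θ)) :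
    (∀ t : ℝ, 0 < t → gradNorm b ((t : ℝ), (0 : ℝ)) = β * t ^ (β - 1)) ∧
    ∫⁻ t in Set.Ioo (0 : ℝ) 1,
      ENNReal.ofReal ((gradNorm b ((t : ℝ), (0 : ℝ))) ^ 2) = ⊤ := by
  have hπ := Real.pi_pos
  have hπ1 : (1:ℝ) < Real.pi := by linarith [Real.pi_gt_three]
  have hα0 : 0 < α := lt_of_lt_of_le hπ hα₁
  have hβ0 : 0 < β := by rw [hβ]; positivity
  have hβhalf : β ≤ 1 / 2 := by
    rw [hβ, div_le_div_iff₀ (by linarith) (by norm_num)]; linarith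
  -- the comparison function: imaginary part of z ^ β
  set g : ℝ × ℝ → ℝ := fun p => ((p.1 + p.2 * Complex.I : ℂ) ^ (β : ℂ)).im with hg
  -- local agreement of b and g near (t, 0), t > 0
  have hloc : ∀ t : ℝ, 0 < t → b =ᶠ[nhds ((t:ℝ), (0:ℝ))] g := by
    intro t ht
    set L : ℝ × ℝ →L[ℝ] ℂ := (Complex.equivRealProdCLM.symm : ℝ × ℝ →L[ℝ] ℂ)
    have hLapp : ∀ p : ℝ × ℝ, L p = p.1 + p.2 * Complex.I := by
      intro p; simp [L, Complex.equivRealProdCLM_symm_apply]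
    have hLt : L ((t:ℝ), (0:ℝ)) = (t : ℂ) := by rw [hLapp]; simp
    have hslit : (t : ℂ) ∈ Complex.slitPlane := by
      simp [Complex.mem_slitPlane_iff, ht]
    have harg_cont : ContinuousAt (fun p : ℝ × ℝ => Complex.arg (L p)) ((t:ℝ), (0:ℝ)) := by
      exact (Complex.continuousAt_arg (by rw [hLt]; exact hslit)).comp L.continuous.continuousAt
    have harg_t : Complex.arg (L ((t:ℝ), (0:ℝ))) = 0 := by rw [hLt]; simp [Complex.arg_ofReal_of_nonneg ht.le]
    set d : ℝ := min δ 1 with hd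
    have hd0 : 0 < d := lt_min hδ one_pos
    have h1 : ∀ᶠ p in nhds ((t:ℝ), (0:ℝ)), Complex.arg (L p) ∈ Set.Ioo (-d) d := by
      have : Set.Ioo (-d) d ∈ nhds (Complex.arg (L ((t:ℝ), (0:ℝ)))) := by
        rw [harg_t]; exact Ioo_mem_nhds (by linarith) hd0
      exact harg_cont.eventually_mem this
    have h2 : ∀ᶠ p in nhds ((t:ℝ), (0:ℝ)), L p ≠ 0 := by
      have : ContinuousAt L ((t:ℝ), (0:ℝ)) := L.continuous.continuousAt
      have hne : {z : ℂ | z ≠ 0} ∈ nhds (L ((t:ℝ), (0:ℝ))) := by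
        rw [hLt]
        exact IsOpen.mem_nhds isOpen_ne (by exact_mod_cast fun h => (ne_of_gt ht) (by exact_mod_cast h))
      exact this.eventually_mem hne
    filter_upwards [h1, h2] with p hp hpne
    set z : ℂ := L p with hz
    have hzre : z.re = p.1 := by rw [hz, hLapp]; simp
    have hzim : z.im = p.2 := by rw [hz, hLapp]; simp
    have habs : 0 < ‖z‖ := norm_pos_iff.mpr hpne
    have hdδ : d ≤ δ := min_le_left _ _
    have hd1 : d ≤ 1 := min_le_right _ _
    have harg1' : -δ < Complex.arg z := by
      have h := hp.1
      simp only [Set.mem_Ioo] at hp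
      linarith [hp.1]
    have harg2 : Complex.arg z < α + δ := by
      simp only [Set.mem_Ioo] at hp
      have h1α : (1:ℝ) < α + δ := by linarith
      linarith [hp.2]
    have key := hb (‖z‖) (Complex.arg z) habs harg1' harg2
    rw [Complex.norm_mul_cos_arg, Complex.norm_mul_sin_arg, hzre, hzim] at key
    have hp12 : ((p.1 : ℂ) + p.2 * Complex.I) = z := by
      rw [← hzre, ← hzim]; exact Complex.re_add_im z
    calc b p = (‖z‖) ^ β * Real.sin (β * Complex.arg z) := key
      _ = (z ^ (β : ℂ)).im := (brown_im_cpow β z hpne).symm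
      _ = g p := by rw [hg]; simp only [hp12]
  -- compute the fderiv of g (hence of b) at (t,0)
  have hgrad : ∀ t : ℝ, 0 < t →
      fderiv ℝ b ((t:ℝ), (0:ℝ)) ((1:ℝ), (0:ℝ)) = 0 ∧
      fderiv ℝ b ((t:ℝ), (0:ℝ)) ((0:ℝ), (1:ℝ)) = β * t ^ (β - 1) := by
    intro t ht
    set L : ℝ × ℝ →L[ℝ] ℂ := (Complex.equivRealProdCLM.symm : ℝ × ℝ →L[ℝ] ℂ)
    have hLapp : ∀ p : ℝ × ℝ, L p = p.1 + p.2 * Complex.I := by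
      intro p; simp [L, Complex.equivRealProdCLM_symm_apply]
    have hLt : L ((t:ℝ), (0:ℝ)) = (t : ℂ) := by rw [hLapp]; simp
    have hslit : (t : ℂ) ∈ Complex.slitPlane := by
      simp [Complex.mem_slitPlane_iff, ht]
    set dC : ℂ := (β : ℂ) * (t : ℂ) ^ ((β : ℂ) - 1) with hdC
    have hcpow : HasFDerivAt (fun z : ℂ => z ^ (β : ℂ))
        (ContinuousLinearMap.restrictScalars ℝ
          (ContinuousLinearMap.smulRight (1 : ℂ →L[ℂ] ℂ) dC)) ((t : ℂ)) :=
      ((Complex.hasStrictDerivAt_cpow_const hslit).hasDerivAt).hasFDerivAt.restrictScalars ℝ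
    have hLd : HasFDerivAt (fun p : ℝ × ℝ => L p) L ((t:ℝ), (0:ℝ)) := L.hasFDerivAt
    have hcomp :
        HasFDerivAt g
          (Complex.imCLM.comp
            ((ContinuousLinearMap.restrictScalars ℝ
              (ContinuousLinearMap.smulRight (1 : ℂ →L[ℂ] ℂ) dC)).comp L)) ((t:ℝ), (0:ℝ)) := by
      have h1 : HasFDerivAt (fun p : ℝ × ℝ => (L p) ^ (β : ℂ))
          ((ContinuousLinearMap.restrictScalars ℝ
            (ContinuousLinearMap.smulRight (1 : ℂ →L[ℂ] ℂ) dC)).comp L) ((t:ℝ), (0:ℝ)) := by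
        rw [← hLt] at hcpow
        exact hcpow.comp ((t:ℝ), (0:ℝ)) hLd
      have h2 := (Complex.imCLM.hasFDerivAt (x := ((L ((t:ℝ),(0:ℝ))) ^ (β : ℂ)))).comp
        ((t:ℝ), (0:ℝ)) h1
      have : g = fun p : ℝ × ℝ => Complex.imCLM ((L p) ^ (β : ℂ)) := by
        funext p; rw [hg]; simp [hLapp]
      rw [this]
      exact h2
    have hfd : fderiv ℝ b ((t:ℝ), (0:ℝ)) = fderiv ℝ g ((t:ℝ), (0:ℝ)) :=
      (hloc t ht).fderiv_eq
    have hfg := hcomp.fderiv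
    have hdCreal : dC = ((β * t ^ (β - 1) : ℝ) : ℂ) := by
      rw [hdC, Complex.ofReal_mul, Complex.ofReal_cpow ht.le]
      push_cast
      ring
    constructor
    · rw [hfd, hfg]
      simp only [ContinuousLinearMap.comp_apply, ContinuousLinearMap.coe_restrictScalars',
        ContinuousLinearMap.smulRight_apply, ContinuousLinearMap.one_apply]
      rw [hLapp]
      simp [hdCreal]
    · rw [hfd, hfg]
      simp only [ContinuousLinearMap.comp_apply, ContinuousLinearMap.coe_restrictScalars',
        ContinuousLinearMap.smulRight_apply, ContinuousLinearMap.one_apply]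
      rw [hLapp]
      simp [hdCreal]
  have part1 : ∀ t : ℝ, 0 < t → gradNorm b ((t:ℝ), (0:ℝ)) = β * t ^ (β - 1) := by
    intro t ht
    obtain ⟨h1, h2⟩ := hgrad t ht
    rw [gradNorm, h1, h2]
    rw [zero_pow (by norm_num), zero_add, Real.sqrt_sq (by positivity)]
  refine ⟨part1, ?_⟩
  -- rewrite the integrand on Ioo 0 1
  have hcong : ∫⁻ t in Set.Ioo (0:ℝ) 1,
      ENNReal.ofReal ((gradNorm b ((t:ℝ), (0:ℝ))) ^ 2) =
      ∫⁻ t in Set.Ioo (0:ℝ) 1, ENNReal.ofReal (β ^ 2 * t ^ (2 * β - 2)) := by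
    apply setLIntegral_congr_fun measurableSet_Ioo
    intro t ht
    dsimp only
    rw [part1 t ht.1]
    congr 1
    rw [mul_pow, ← Real.rpow_natCast (t ^ (β - 1)) 2, ← Real.rpow_mul ht.1.le]
    have h2 : (β - 1) * ((2:ℕ):ℝ) = 2 * β - 2 := by push_cast; ring
    rw [h2]
  rw [hcong]
  by_contra htop
  have hmeas : AEStronglyMeasurable (fun t : ℝ => β ^ 2 * t ^ (2 * β - 2))
      (volume.restrict (Set.Ioo (0:ℝ) 1)) := by
    apply Measurable.aestronglyMeasurable
    measurability
  have hnn : 0 ≤ᵐ[volume.restrict (Set.Ioo (0:ℝ) 1)]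
      fun t : ℝ => β ^ 2 * t ^ (2 * β - 2) := by
    filter_upwards [ae_restrict_mem measurableSet_Ioo] with t ht
    have : (0:ℝ) ≤ t ^ (2 * β - 2) := Real.rpow_nonneg ht.1.le _
    positivity
  have hint : Integrable (fun t : ℝ => β ^ 2 * t ^ (2 * β - 2))
      (volume.restrict (Set.Ioo (0:ℝ) 1)) :=
    (lintegral_ofReal_ne_top_iff_integrable hmeas hnn).mp htop
  have hint2 : IntegrableOn (fun t : ℝ => t ^ (2 * β - 2)) (Set.Ioo (0:ℝ) 1) := by
    have hβ2 : (β ^ 2 : ℝ) ≠ 0 := by positivity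
    have := hint.const_mul ((β ^ 2)⁻¹)
    simpa [IntegrableOn, ← mul_assoc, inv_mul_cancel₀ hβ2] using this
  rw [intervalIntegral.integrableOn_Ioo_rpow_iff one_pos] at hint2
  linarith
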